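/- Let G be a finite tree rooted at o, let S be the collection of nonempty vertex subsets not containing o, and for B ∈ S define ν_B = inf { ∑_{e∈E} f(e)² : f : E → ℝ, ∑_{e∈ℓ(v)} f(e) ≥ 1 for all v ∈ B }. Then for every g : E → ℝ, ∑_{v∈V} (∑_{e∈ℓ(v)} g(e))² ≤ 32 · (max_{B∈S} |B|/ν_B) · ∑_{e∈E} g(e)². -/

import Mathlib

open Finset

/-- Edges on the path from `o` to `v` in a tree, encoded by their endpoints farther
from `o`: the vertices `u ≠ o` lying on the path from `o` to `v`. -/
noncomputable def pathE {V : Type*} [Fintype V] [DecidableEq V] (G : SimpleGraph V) (o v : V) :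
    Finset V :=
  Finset.univ.filter fun u => u ≠ o ∧ G.dist o u + G.dist u v = G.dist o v

/-- `ν_B`: the infimum of `∑_e f(e)²` over `f : E → ℝ` with `∑_{e ∈ ℓ(v)} f(e) ≥ 1`
for every `v ∈ B` (edges encoded by their far endpoints). -/
noncomputable def nuB {V : Type*} [Fintype V] [DecidableEq V] (G : SimpleGraph V)
    (o : V) (B : Finset V) : ℝ :=
  sInf {r : ℝ | ∃ f : V → ℝ, (∀ v ∈ B, 1 ≤ ∑ u ∈ pathE G o v, f u) ∧
    r = ∑ u ∈ Finset.univ.filter fun u => u ≠ o, (f u) ^ 2}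

section Aux

variable {V : Type*} [Fintype V] [DecidableEq V] {G : SimpleGraph V} {o v u w : V} {B : Finset V}

lemma mem_pathE : u ∈ pathE G o v ↔ u ≠ o ∧ G.dist o u + G.dist u v = G.dist o v := by
  simp [pathE]

lemma self_mem_pathE (h : v ≠ o) : v ∈ pathE G o v := by
  simp [pathE, h]

lemma pathE_root (hc : G.Connected) : pathE G o o = ∅ := by
  ext u
  simp only [pathE, mem_filter, mem_univ, true_and, notMem_empty, iff_false, not_and]
  intro hu hd
  have h0 : G.dist o o = 0 := SimpleGraph.dist_self
  rw [h0, Nat.add_eq_zero] at hd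
  exact (hu ((hc.dist_eq_zero_iff.mp hd.1).symm)).elim

lemma pathE_subset (hc : G.Connected) (hu : u ∈ pathE G o v) :
    pathE G o u ⊆ pathE G o v := by
  intro w hw
  rw [mem_pathE] at hu hw ⊢
  obtain ⟨huo, hu2⟩ := hu
  obtain ⟨hwo, hw2⟩ := hw
  refine ⟨hwo, ?_⟩
  have t1 : G.dist o v ≤ G.dist o w + G.dist w v := hc.dist_triangle
  have t2 : G.dist w v ≤ G.dist w u + G.dist u v := hc.dist_triangle
  omega

lemma pathE_chain (hG : G.IsTree) (hu : u ∈ pathE G o v) (hw : w ∈ pathE G o v) :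
    u ∈ pathE G o w ∨ w ∈ pathE G o u := by
  have hc : G.Connected := hG.isConnected
  rw [mem_pathE] at hu hw
  obtain ⟨huo, hu2⟩ := hu
  obtain ⟨hwo, hw2⟩ := hw
  obtain ⟨p, hp, hplen⟩ := hc.exists_path_of_dist o v
  have hsup : ∀ x : V, G.dist o x + G.dist x v = G.dist o v → x ∈ p.support := by
    intro x hx
    obtain ⟨p₁, hp₁, hl₁⟩ := hc.exists_path_of_dist o x
    obtain ⟨p₂, hp₂, hl₂⟩ := hc.exists_path_of_dist x v
    have hq : (p₁.append p₂).IsPath := by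
      apply SimpleGraph.Walk.isPath_of_length_eq_dist
      rw [SimpleGraph.Walk.length_append, hl₁, hl₂, hx]
    have heq : (⟨p₁.append p₂, hq⟩ : G.Path o v) = ⟨p, hp⟩ := hG.IsAcyclic.path_unique _ _
    have heq' : p₁.append p₂ = p := congrArg Subtype.val heq
    rw [← heq', SimpleGraph.Walk.mem_support_append_iff]
    exact Or.inl (SimpleGraph.Walk.end_mem_support p₁)
  have hu_sup := hsup u hu2
  have hw_sup := hsup w hw2
  have hspec : (p.takeUntil u hu_sup).append (p.dropUntil u hu_sup) = p := p.take_spec hu_sup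
  have hlen : (p.takeUntil u hu_sup).length + (p.dropUntil u hu_sup).length = G.dist o v := by
    rw [← SimpleGraph.Walk.length_append, hspec, hplen]
  have hd1 : G.dist o u ≤ (p.takeUntil u hu_sup).length := SimpleGraph.dist_le _
  have hd2 : G.dist u v ≤ (p.dropUntil u hu_sup).length := SimpleGraph.dist_le _
  have hq1 : (p.takeUntil u hu_sup).length = G.dist o u := by omega
  have hq2 : (p.dropUntil u hu_sup).length = G.dist u v := by omega
  have hwq : w ∈ (p.takeUntil u hu_sup).support ∨ w ∈ (p.dropUntil u hu_sup).support := by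
    rw [← SimpleGraph.Walk.mem_support_append_iff, hspec]
    exact hw_sup
  rcases hwq with h1 | h1
  · right
    rw [mem_pathE]
    refine ⟨hwo, ?_⟩
    set q := p.takeUntil u hu_sup with hqdef
    have hspec2 : (q.takeUntil w h1).append (q.dropUntil w h1) = q := q.take_spec h1
    have hl : (q.takeUntil w h1).length + (q.dropUntil w h1).length = G.dist o u := by
      rw [← SimpleGraph.Walk.length_append, hspec2, hq1]
    have d1 : G.dist o w ≤ (q.takeUntil w h1).length := SimpleGraph.dist_le _
    have d2 : G.dist w u ≤ (q.dropUntil w h1).length := SimpleGraph.dist_le _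
    have t : G.dist o u ≤ G.dist o w + G.dist w u := hc.dist_triangle
    omega
  · left
    rw [mem_pathE]
    refine ⟨huo, ?_⟩
    set q := p.dropUntil u hu_sup with hqdef
    have hspec2 : (q.takeUntil w h1).append (q.dropUntil w h1) = q := q.take_spec h1
    have hl : (q.takeUntil w h1).length + (q.dropUntil w h1).length = G.dist u v := by
      rw [← SimpleGraph.Walk.length_append, hspec2, hq2]
    have d1 : G.dist u w ≤ (q.takeUntil w h1).length := SimpleGraph.dist_le _
    have d2 : G.dist w v ≤ (q.dropUntil w h1).length := SimpleGraph.dist_le _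
    have t : G.dist o w ≤ G.dist o u + G.dist u w := hc.dist_triangle
    omega

lemma nuB_le (f : V → ℝ) (hf : ∀ v ∈ B, 1 ≤ ∑ u ∈ pathE G o v, f u) :
    nuB G o B ≤ ∑ u ∈ Finset.univ.filter (fun u => u ≠ o), (f u) ^ 2 := by
  apply csInf_le
  · refine ⟨0, ?_⟩
    rintro r ⟨f', -, rfl⟩
    positivity
  · exact ⟨f, hf, rfl⟩

lemma one_div_card_le_nuB (hB : B.Nonempty) (hoB : o ∉ B) :
    (1 : ℝ) / (Fintype.card V) ≤ nuB G o B := by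
  obtain ⟨v, hv⟩ := hB
  have hvo : v ≠ o := fun h => hoB (h ▸ hv)
  have hn : (0 : ℝ) < Fintype.card V := by
    have : Nonempty V := ⟨v⟩
    exact_mod_cast Fintype.card_pos
  apply le_csInf
  · refine ⟨_, ⟨fun _ => (1 : ℝ), fun w hw => ?_, rfl⟩⟩
    have hwo : w ≠ o := fun h => hoB (h ▸ hw)
    have hmem : w ∈ pathE G o w := self_mem_pathE hwo
    rw [Finset.sum_const, nsmul_eq_mul, mul_one]
    have : 1 ≤ (pathE G o w).card := Finset.card_pos.mpr ⟨w, hmem⟩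
    exact_mod_cast this
  · rintro r ⟨f, hf, rfl⟩
    have h1 : (1 : ℝ) ≤ ∑ u ∈ pathE G o v, f u := hf v hv
    have h2 : (∑ u ∈ pathE G o v, f u) ^ 2 ≤
        (pathE G o v).card * ∑ u ∈ pathE G o v, (f u) ^ 2 :=
      sq_sum_le_card_mul_sum_sq
    have h3 : ∑ u ∈ pathE G o v, (f u) ^ 2 ≤
        ∑ u ∈ Finset.univ.filter (fun u => u ≠ o), (f u) ^ 2 := by
      apply Finset.sum_le_sum_of_subset_of_nonneg
      · intro u hu
        rw [mem_pathE] at hu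
        simp [hu.1]
      · intros; positivity
    have h4 : ((pathE G o v).card : ℝ) ≤ Fintype.card V := by
      exact_mod_cast Finset.card_le_univ _
    have h5 : (0 : ℝ) ≤ ∑ u ∈ pathE G o v, (f u) ^ 2 := by positivity
    rw [div_le_iff₀ hn]
    nlinarith [h2, h3, h4, h5, h1]

lemma hardy_key {V : Type*} [Fintype V] [DecidableEq V]
    (G : SimpleGraph V) (hG : G.IsTree) (o : V)
    (S : Finset (Finset V))
    (hS : S = Finset.univ.powerset.filter fun B => B.Nonempty ∧ o ∉ B)
    (hSne : S.Nonempty) (g : V → ℝ) (hg : ∀ u, 0 ≤ g u) :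
    ∑ v : V, (∑ u ∈ pathE G o v, g u) ^ 2 ≤
      32 * (S.sup' hSne fun B => (B.card : ℝ) / nuB G o B) *
        ∑ u ∈ Finset.univ.filter fun u => u ≠ o, (g u) ^ 2 := by
  classical
  have hc : G.Connected := hG.isConnected
  set M := S.sup' hSne fun B => (B.card : ℝ) / nuB G o B with hMdef
  set h : V → ℝ := fun v => ∑ u ∈ pathE G o v, g u with hhdef
  have hh0 : ∀ v, 0 ≤ h v := fun v => Finset.sum_nonneg fun u _ => hg u
  have hho : h o = 0 := by rw [hhdef]; simp [pathE_root hc]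
  have hmemS : ∀ B : Finset V, B.Nonempty → o ∉ B → B ∈ S := by
    intro B h1 h2
    rw [hS]
    simp only [Finset.mem_filter, Finset.mem_powerset, Finset.subset_univ, true_and]
    exact ⟨h1, h2⟩
  have hM0 : 0 ≤ M := by
    obtain ⟨B₀, hB₀⟩ := hSne
    have hB₀' : B₀.Nonempty ∧ o ∉ B₀ := by
      rw [hS] at hB₀
      exact (Finset.mem_filter.mp hB₀).2
    have hnu0 : 0 ≤ nuB G o B₀ := by
      obtain ⟨v₀, hv₀⟩ := hB₀'.1
      have : Nonempty V := ⟨v₀⟩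
      have hcp : (0:ℝ) < Fintype.card V := by exact_mod_cast Fintype.card_pos
      exact le_trans (le_of_lt (div_pos one_pos hcp)) (one_div_card_le_nuB hB₀'.1 hB₀'.2)
    have hle := Finset.le_sup' (f := fun B => ((B.card : ℝ) / nuB G o B)) hB₀
    rw [← hMdef] at hle
    exact le_trans (div_nonneg (Nat.cast_nonneg _) hnu0) hle
  have hmono : ∀ v, ∀ u ∈ pathE G o v, h u ≤ h v := by
    intro v u hu
    exact Finset.sum_le_sum_of_subset_of_nonneg (pathE_subset hc hu) (fun i _ _ => hg i)
  set Bs : ℤ → Finset V :=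
    fun i => Finset.univ.filter (fun v => (2:ℝ) ^ i ≤ h v ∧ h v < (2:ℝ) ^ (i + 1)) with hBdef
  set I : Finset ℤ :=
    (Finset.univ.filter (fun v => 0 < h v)).image (fun v => ⌊Real.logb 2 (h v)⌋) with hIdef
  have hBsmem : ∀ v, 0 < h v → v ∈ Bs ⌊Real.logb 2 (h v)⌋ := by
    intro v hv
    rw [hBdef]
    simp only [Finset.mem_filter, Finset.mem_univ, true_and]
    constructor
    · calc (2:ℝ) ^ (⌊Real.logb 2 (h v)⌋)
          = (2:ℝ) ^ ((⌊Real.logb 2 (h v)⌋ : ℝ)) := (Real.rpow_intCast 2 _).symm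
        _ ≤ (2:ℝ) ^ (Real.logb 2 (h v)) :=
            Real.rpow_le_rpow_of_exponent_le one_le_two (Int.floor_le _)
        _ = h v := Real.rpow_logb two_pos (by norm_num) hv
    · calc h v = (2:ℝ) ^ (Real.logb 2 (h v)) := (Real.rpow_logb two_pos (by norm_num) hv).symm
        _ < (2:ℝ) ^ (((⌊Real.logb 2 (h v)⌋ + 1 : ℤ) : ℝ)) := by
            apply Real.rpow_lt_rpow_of_exponent_lt one_lt_two
            push_cast
            exact Int.lt_floor_add_one _
        _ = (2:ℝ) ^ ((⌊Real.logb 2 (h v)⌋ + 1 : ℤ)) := Real.rpow_intCast 2 _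
  have step0 : ∑ v : V, h v ^ 2 = ∑ v ∈ Finset.univ.filter (fun v => 0 < h v), h v ^ 2 := by
    symm
    apply Finset.sum_subset (Finset.subset_univ _)
    intro v _ hv
    simp only [Finset.mem_filter, Finset.mem_univ, true_and, not_lt] at hv
    have : h v = 0 := le_antisymm hv (hh0 v)
    simp [this]
  have hdisj : (I : Set ℤ).PairwiseDisjoint Bs := by
    have key : ∀ a b : ℤ, a < b → ∀ x ∈ Bs a, x ∉ Bs b := by
      intro a b hab x hxa hxb
      rw [hBdef] at hxa hxb
      simp only [Finset.mem_filter, Finset.mem_univ, true_and] at hxa hxb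
      have : (2:ℝ) ^ (a + 1) ≤ (2:ℝ) ^ b := zpow_le_zpow_right₀ one_le_two (by omega)
      linarith [hxa.2, hxb.1]
    intro i _ j _ hij
    rw [Function.onFun]
    apply Finset.disjoint_left.mpr
    intro x hxi hxj
    rcases lt_or_gt_of_ne hij with hlt | hlt
    · exact key i j hlt x hxi hxj
    · exact key j i hlt x hxj hxi
  have hPsub : Finset.univ.filter (fun v => 0 < h v) ⊆ I.biUnion Bs := by
    intro v hv
    simp only [Finset.mem_filter, Finset.mem_univ, true_and] at hv
    apply Finset.mem_biUnion.mpr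
    refine ⟨⌊Real.logb 2 (h v)⌋, ?_, hBsmem v hv⟩
    rw [hIdef]
    exact Finset.mem_image_of_mem _ (by simp [hv])
  have step1 : ∑ v ∈ Finset.univ.filter (fun v => 0 < h v), h v ^ 2 ≤
      ∑ i ∈ I, ∑ v ∈ Bs i, h v ^ 2 := by
    rw [← Finset.sum_biUnion hdisj]
    apply Finset.sum_le_sum_of_subset_of_nonneg hPsub
    intros
    positivity
  have step2 : ∀ i ∈ I, ∑ v ∈ Bs i, h v ^ 2 ≤ ((Bs i).card : ℝ) * ((2:ℝ) ^ (i + 1)) ^ 2 := by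
    intro i _
    have := Finset.sum_le_card_nsmul (Bs i) (fun v => h v ^ 2) (((2:ℝ) ^ (i + 1)) ^ 2) ?_
    · rwa [nsmul_eq_mul] at this
    · intro v hv
      rw [hBdef] at hv
      simp only [Finset.mem_filter, Finset.mem_univ, true_and] at hv
      exact pow_le_pow_left₀ (hh0 v) hv.2.le 2
  have key_i : ∀ i ∈ I, ((Bs i).card : ℝ) * ((2:ℝ) ^ (i + 1)) ^ 2 ≤
      16 * M * ∑ u ∈ Finset.univ.filter (fun u => u ≠ o),
        (if (2:ℝ) ^ (i - 1) < h u ∧ h u < (2:ℝ) ^ (i + 1) then g u else 0) ^ 2 := by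
    intro i hi
    rw [hIdef] at hi
    obtain ⟨v₀, hv₀, hfl⟩ := Finset.mem_image.mp hi
    simp only [Finset.mem_filter, Finset.mem_univ, true_and] at hv₀
    have hBne : (Bs i).Nonempty := ⟨v₀, hfl ▸ hBsmem v₀ hv₀⟩
    have hoB : o ∉ Bs i := by
      intro hmem
      rw [hBdef] at hmem
      simp only [Finset.mem_filter, Finset.mem_univ, true_and, hho] at hmem
      exact absurd hmem.1 (not_le.mpr (zpow_pos two_pos i))
    set fi : V → ℝ :=
      fun u => if (2:ℝ) ^ (i - 1) < h u ∧ h u < (2:ℝ) ^ (i + 1) then g u else 0 with hfidef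
    have hfeas : ∀ v ∈ Bs i, (2:ℝ) ^ (i - 1) ≤ ∑ u ∈ pathE G o v, fi u := by
      intro v hv
      rw [hBdef] at hv
      simp only [Finset.mem_filter, Finset.mem_univ, true_and] at hv
      have hup : ∀ u ∈ pathE G o v, h u < (2:ℝ) ^ (i + 1) :=
        fun u hu => lt_of_le_of_lt (hmono v u hu) hv.2
      have hsum : ∑ u ∈ pathE G o v, fi u =
          ∑ u ∈ (pathE G o v).filter (fun u => (2:ℝ) ^ (i - 1) < h u), g u := by
        rw [Finset.sum_filter]
        apply Finset.sum_congr rfl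
        intro u hu
        rw [hfidef]
        by_cases hcu : (2:ℝ) ^ (i - 1) < h u
        · rw [if_pos hcu]
          simp only
          rw [if_pos ⟨hcu, hup u hu⟩]
        · rw [if_neg hcu]
          simp only
          rw [if_neg (fun hh => hcu hh.1)]
      have hsplit := Finset.sum_filter_add_sum_filter_not (pathE G o v)
        (fun u => (2:ℝ) ^ (i - 1) < h u) g
      have hA : ∑ u ∈ (pathE G o v).filter (fun u => ¬ (2:ℝ) ^ (i - 1) < h u), g u ≤
          (2:ℝ) ^ (i - 1) := by
        set A := (pathE G o v).filter (fun u => ¬ (2:ℝ) ^ (i - 1) < h u) with hAdef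
        rcases A.eq_empty_or_nonempty with hAe | hAne
        · rw [hAe, Finset.sum_empty]
          positivity
        · obtain ⟨u₀, hu₀A, hu₀max⟩ := A.exists_max_image (fun u => G.dist o u) hAne
          have hu₀path : u₀ ∈ pathE G o v := (Finset.mem_filter.mp hu₀A).1
          have hu₀small : ¬ (2:ℝ) ^ (i - 1) < h u₀ := (Finset.mem_filter.mp hu₀A).2
          have hAsub : A ⊆ pathE G o u₀ := by
            intro x hxA
            have hxpath : x ∈ pathE G o v := (Finset.mem_filter.mp hxA).1
            rcases pathE_chain hG hxpath hu₀path with hcase | hcase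
            · exact hcase
            · rw [mem_pathE] at hcase
              have hle := hu₀max x hxA
              have hd0 : G.dist u₀ x = 0 := by omega
              have hux : u₀ = x := hc.dist_eq_zero_iff.mp hd0
              rw [← hux]
              exact self_mem_pathE (mem_pathE.mp hu₀path).1
          calc ∑ u ∈ A, g u ≤ ∑ u ∈ pathE G o u₀, g u :=
                Finset.sum_le_sum_of_subset_of_nonneg hAsub (fun x _ _ => hg x)
            _ = h u₀ := rfl
            _ ≤ (2:ℝ) ^ (i - 1) := not_lt.mp hu₀small
      have hpow : (2:ℝ) ^ i - (2:ℝ) ^ (i - 1) = (2:ℝ) ^ (i - 1) := by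
        rw [show i = (i - 1) + 1 by ring]
        rw [zpow_add_one₀ (two_ne_zero : (2:ℝ) ≠ 0)]
        ring_nf
      have hhv : h v = ∑ u ∈ pathE G o v, g u := rfl
      rw [hsum]
      have := hv.1
      linarith [hsplit, hA, this]
    have hfeas1 : ∀ v ∈ Bs i, 1 ≤ ∑ u ∈ pathE G o v, (2:ℝ) ^ (1 - i) * fi u := by
      intro v hv
      rw [← Finset.mul_sum]
      have h1 := hfeas v hv
      have h2 : (2:ℝ) ^ (1 - i) * (2:ℝ) ^ (i - 1) = 1 := by
        rw [← zpow_add₀ (two_ne_zero : (2:ℝ) ≠ 0)]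
        norm_num
      calc (1:ℝ) = (2:ℝ) ^ (1 - i) * (2:ℝ) ^ (i - 1) := h2.symm
        _ ≤ (2:ℝ) ^ (1 - i) * ∑ u ∈ pathE G o v, fi u :=
            mul_le_mul_of_nonneg_left h1 (le_of_lt (zpow_pos two_pos _))
    have hnu := nuB_le (fun u => (2:ℝ) ^ (1 - i) * fi u) hfeas1
    have hMi : ((Bs i).card : ℝ) / nuB G o (Bs i) ≤ M := by
      have hle := Finset.le_sup' (f := fun B => ((B.card : ℝ) / nuB G o B)) (hmemS _ hBne hoB)
      rw [← hMdef] at hle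
      exact hle
    have hnupos : 0 < nuB G o (Bs i) := by
      have : Nonempty V := ⟨hBne.choose⟩
      have hcp : (0:ℝ) < Fintype.card V := by exact_mod_cast Fintype.card_pos
      exact lt_of_lt_of_le (div_pos one_pos hcp) (one_div_card_le_nuB hBne hoB)
    have hcard_le : ((Bs i).card : ℝ) ≤ M * nuB G o (Bs i) := by
      rwa [div_le_iff₀ hnupos] at hMi
    have hsum2 : ∑ u ∈ Finset.univ.filter (fun u => u ≠ o), ((2:ℝ) ^ (1 - i) * fi u) ^ 2 =
        ((2:ℝ) ^ (1 - i)) ^ 2 * ∑ u ∈ Finset.univ.filter (fun u => u ≠ o), fi u ^ 2 := by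
      rw [Finset.mul_sum]
      apply Finset.sum_congr rfl
      intro u _
      ring
    have h16 : ((2:ℝ) ^ (1 - i)) ^ 2 * ((2:ℝ) ^ (i + 1)) ^ 2 = 16 := by
      rw [← mul_pow, ← zpow_add₀ (two_ne_zero : (2:ℝ) ≠ 0)]
      rw [show (1 - i) + (i + 1) = 2 by ring]
      norm_num
    calc ((Bs i).card : ℝ) * ((2:ℝ) ^ (i + 1)) ^ 2
        ≤ (M * nuB G o (Bs i)) * ((2:ℝ) ^ (i + 1)) ^ 2 :=
          mul_le_mul_of_nonneg_right hcard_le (by positivity)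
      _ ≤ (M * ∑ u ∈ Finset.univ.filter (fun u => u ≠ o), ((2:ℝ) ^ (1 - i) * fi u) ^ 2) *
            ((2:ℝ) ^ (i + 1)) ^ 2 :=
          mul_le_mul_of_nonneg_right (mul_le_mul_of_nonneg_left hnu hM0) (by positivity)
      _ = 16 * M * ∑ u ∈ Finset.univ.filter (fun u => u ≠ o), fi u ^ 2 := by
          rw [hsum2]
          rw [show (M * (((2:ℝ) ^ (1 - i)) ^ 2 *
              ∑ u ∈ Finset.univ.filter (fun u => u ≠ o), fi u ^ 2)) * ((2:ℝ) ^ (i + 1)) ^ 2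
              = (((2:ℝ) ^ (1 - i)) ^ 2 * ((2:ℝ) ^ (i + 1)) ^ 2) *
                (M * ∑ u ∈ Finset.univ.filter (fun u => u ≠ o), fi u ^ 2) by ring]
          rw [h16]
          ring
  have count : ∀ u : V, ∑ i ∈ I,
      (if (2:ℝ) ^ (i - 1) < h u ∧ h u < (2:ℝ) ^ (i + 1) then g u else 0) ^ 2 ≤ 2 * g u ^ 2 := by
    intro u
    set cond : ℤ → Prop := fun i => (2:ℝ) ^ (i - 1) < h u ∧ h u < (2:ℝ) ^ (i + 1) with hconddef
    have hrw : ∑ i ∈ I, (if cond i then g u else 0) ^ 2 =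
        ((I.filter cond).card : ℝ) * g u ^ 2 := by
      calc ∑ i ∈ I, (if cond i then g u else 0) ^ 2
          = ∑ i ∈ I, (if cond i then g u ^ 2 else 0) := by
            apply Finset.sum_congr rfl
            intro i _
            split <;> simp
        _ = ∑ i ∈ I.filter cond, g u ^ 2 := (Finset.sum_filter _ _).symm
        _ = ((I.filter cond).card : ℝ) * g u ^ 2 := by
            rw [Finset.sum_const, nsmul_eq_mul]
    rw [hrw]
    apply mul_le_mul_of_nonneg_right _ (sq_nonneg _)
    have hcard2 : (I.filter cond).card ≤ 2 := by
      rcases (I.filter cond).eq_empty_or_nonempty with hfe | hfne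
      · rw [hfe]; simp
      · obtain ⟨i₀, hi₀⟩ := hfne
        have hu_pos : 0 < h u :=
          lt_trans (zpow_pos two_pos _) ((Finset.mem_filter.mp hi₀).2).1
        set L := Real.logb 2 (h u) with hLdef
        have hsub : I.filter cond ⊆ {⌊L⌋, ⌊L⌋ + 1} := by
          intro i hi
          obtain ⟨-, h1, h2⟩ := Finset.mem_filter.mp hi
          have e1 : ((i - 1 : ℤ) : ℝ) < L := by
            have h2pow : (2:ℝ) ^ (((i - 1 : ℤ)) : ℝ) = (2:ℝ) ^ ((i - 1 : ℤ)) :=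
              Real.rpow_intCast 2 _
            have := Real.logb_lt_logb (by norm_num : (1:ℝ) < 2) (zpow_pos two_pos _) h1
            rwa [← h2pow, Real.logb_rpow two_pos (by norm_num)] at this
          have e2 : L < ((i + 1 : ℤ) : ℝ) := by
            have h2pow : (2:ℝ) ^ (((i + 1 : ℤ)) : ℝ) = (2:ℝ) ^ ((i + 1 : ℤ)) :=
              Real.rpow_intCast 2 _
            have := Real.logb_lt_logb (by norm_num : (1:ℝ) < 2) hu_pos h2
            rwa [← h2pow, Real.logb_rpow two_pos (by norm_num)] at this
          have f1 : i - 1 ≤ ⌊L⌋ := Int.le_floor.mpr e1.le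
          have f2 : ⌊L⌋ ≤ i := by
            have hfl : ((⌊L⌋ : ℤ) : ℝ) < ((i + 1 : ℤ) : ℝ) := lt_of_le_of_lt (Int.floor_le L) e2
            have : (⌊L⌋ : ℤ) < i + 1 := by exact_mod_cast hfl
            omega
          simp only [Finset.mem_insert, Finset.mem_singleton]
          omega
        calc (I.filter cond).card ≤ ({⌊L⌋, ⌊L⌋ + 1} : Finset ℤ).card :=
              Finset.card_le_card hsub
          _ ≤ 2 := le_trans (Finset.card_insert_le _ _) (by simp)
    exact_mod_cast hcard2
  calc ∑ v : V, h v ^ 2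
      = ∑ v ∈ Finset.univ.filter (fun v => 0 < h v), h v ^ 2 := step0
    _ ≤ ∑ i ∈ I, ∑ v ∈ Bs i, h v ^ 2 := step1
    _ ≤ ∑ i ∈ I, ((Bs i).card : ℝ) * ((2:ℝ) ^ (i + 1)) ^ 2 := Finset.sum_le_sum step2
    _ ≤ ∑ i ∈ I, (16 * M * ∑ u ∈ Finset.univ.filter (fun u => u ≠ o),
          (if (2:ℝ) ^ (i - 1) < h u ∧ h u < (2:ℝ) ^ (i + 1) then g u else 0) ^ 2) :=
        Finset.sum_le_sum key_i
    _ = 16 * M * ∑ u ∈ Finset.univ.filter (fun u => u ≠ o), ∑ i ∈ I,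
          (if (2:ℝ) ^ (i - 1) < h u ∧ h u < (2:ℝ) ^ (i + 1) then g u else 0) ^ 2 := by
        rw [← Finset.mul_sum, Finset.sum_comm]
    _ ≤ 16 * M * ∑ u ∈ Finset.univ.filter (fun u => u ≠ o), 2 * g u ^ 2 := by
        apply mul_le_mul_of_nonneg_left (Finset.sum_le_sum fun u _ => count u)
        exact mul_nonneg (by norm_num) hM0
    _ = 32 * M * ∑ u ∈ Finset.univ.filter (fun u => u ≠ o), (g u) ^ 2 := by
        rw [Finset.mul_sum, Finset.mul_sum]
        apply Finset.sum_congr rfl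
        intro u _
        ring

end Aux

/-- Hardy inequality via capacities: for every `g : E → ℝ`,
`∑_v (∑_{e ∈ ℓ(v)} g(e))² ≤ 32 · (max_{B ∈ S} |B|/ν_B) · ∑_e g(e)²`, where `S` is
the collection of nonempty vertex sets avoiding the root `o`. -/
theorem hardy_capacity_bound {V : Type*} [Fintype V] [DecidableEq V]
    (G : SimpleGraph V) (hG : G.IsTree) (o : V)
    (S : Finset (Finset V))
    (hS : S = Finset.univ.powerset.filter fun B => B.Nonempty ∧ o ∉ B)
    (hSne : S.Nonempty) (g : V → ℝ) :
    ∑ v : V, (∑ u ∈ pathE G o v, g u) ^ 2 ≤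
      32 * (S.sup' hSne fun B => (B.card : ℝ) / nuB G o B) *
        ∑ u ∈ Finset.univ.filter fun u => u ≠ o, (g u) ^ 2 := by
  have key := hardy_key G hG o S hS hSne (fun u => |g u|) (fun u => abs_nonneg _)
  have hL : ∑ v : V, (∑ u ∈ pathE G o v, g u) ^ 2 ≤
      ∑ v : V, (∑ u ∈ pathE G o v, |g u|) ^ 2 := by
    apply Finset.sum_le_sum
    intro v _
    rw [← sq_abs (∑ u ∈ pathE G o v, g u)]
    exact pow_le_pow_left₀ (abs_nonneg _) (Finset.abs_sum_le_sum_abs _ _) 2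
  have hR : ∑ u ∈ Finset.univ.filter (fun u => u ≠ o), |g u| ^ 2 =
      ∑ u ∈ Finset.univ.filter (fun u => u ≠ o), (g u) ^ 2 := by
    apply Finset.sum_congr rfl
    intro u _
    rw [sq_abs]
  calc ∑ v : V, (∑ u ∈ pathE G o v, g u) ^ 2
      ≤ ∑ v : V, (∑ u ∈ pathE G o v, |g u|) ^ 2 := hL
    _ ≤ 32 * (S.sup' hSne fun B => (B.card : ℝ) / nuB G o B) *
        ∑ u ∈ Finset.univ.filter fun u => u ≠ o, |g u| ^ 2 := key
    _ = 32 * (S.sup' hSne fun B => (B.card : ℝ) / nuB G o B) *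
        ∑ u ∈ Finset.univ.filter fun u => u ≠ o, (g u) ^ 2 := by rw [hR]
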